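/- There exists a non-decreasing, continuous function f : [0,∞) → ℝ with f(0) = −1/2, f(1) = 0, f(x) ≤ 1/2 for all x ≥ 0, and lim_{x→+∞} f(x) = 1/2, whose generalized asymptotic elasticity at +∞ is infinite: for every γ > 0 and every x̄ ≥ 0 there exist λ ≥ 1 and x ≥ x̄ such that f(λx) > λ^γ f(x). Nevertheless, f satisfies the growth condition (GR): with x̄ = 1 and c = 1/2, for any γ̄ > 0 one has f(λx) ≤ λ^γ̄ f(x) + λ^γ̄ c for all λ ≥ 1 and x ≥ 1. -/

import Mathlib

open MeasureTheory Filter Set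
open scoped ENNReal

noncomputable section BUaux

/-- the ramp -/
def BUphi (n : ℕ) (x : ℝ) : ℝ := min 1 (max 0 ((8:ℝ)^n * (x - 2^n)))

/-- summand -/
def BUt (n : ℕ) (x : ℝ) : ℝ := (1/2:ℝ)^n / 4 * BUphi n x

/-- the function -/
def BUf (x : ℝ) : ℝ := (min x 1 - 1)/2 + ∑' n, BUt n x

lemma BUphi_nonneg (n : ℕ) (x : ℝ) : 0 ≤ BUphi n x :=
  le_min zero_le_one (le_max_left _ _)

lemma BUphi_le_one (n : ℕ) (x : ℝ) : BUphi n x ≤ 1 := min_le_left _ _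

lemma BUphi_mono (n : ℕ) : Monotone (BUphi n) := by
  intro a b hab
  unfold BUphi
  have h8 : (0:ℝ) ≤ 8 ^ n := by positivity
  apply min_le_min le_rfl
  apply max_le_max le_rfl
  apply mul_le_mul_of_nonneg_left (by linarith) h8

lemma BUphi_eq_zero (n : ℕ) (x : ℝ) (h : x ≤ 2 ^ n) : BUphi n x = 0 := by
  unfold BUphi
  have h8 : (0:ℝ) ≤ 8 ^ n := by positivity
  have : (8:ℝ)^n * (x - 2^n) ≤ 0 := mul_nonpos_of_nonneg_of_nonpos h8 (by linarith)
  rw [max_eq_left this, min_eq_right zero_le_one]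

lemma BUphi_eq_one (n : ℕ) (x : ℝ) (h : (1:ℝ) ≤ 8^n * (x - 2^n)) : BUphi n x = 1 := by
  unfold BUphi
  rw [min_eq_left (le_max_of_le_right h)]

lemma BUt_norm_le (n : ℕ) (x : ℝ) : ‖BUt n x‖ ≤ (1/2:ℝ)^n / 4 := by
  rw [Real.norm_eq_abs, BUt, abs_mul]
  have h1 : |(1/2:ℝ)^n / 4| = (1/2:ℝ)^n/4 := abs_of_nonneg (by positivity)
  have h2 : |BUphi n x| ≤ 1 := by
    rw [abs_of_nonneg (BUphi_nonneg n x)]; exact BUphi_le_one n x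
  calc |(1/2:ℝ)^n / 4| * |BUphi n x| ≤ |(1/2:ℝ)^n / 4| * 1 := by
        apply mul_le_mul_of_nonneg_left h2 (abs_nonneg _)
    _ = (1/2:ℝ)^n/4 := by rw [mul_one, h1]

lemma BU_summable_bound : Summable (fun n : ℕ => (1/2:ℝ)^n / 4) := by
  exact (summable_geometric_of_lt_one (by norm_num) (by norm_num)).div_const 4

lemma BUt_summable (x : ℝ) : Summable (fun n => BUt n x) :=
  Summable.of_norm_bounded BU_summable_bound (fun n => BUt_norm_le n x)

lemma BUt_mono (n : ℕ) : Monotone (BUt n) := by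
  intro a b hab
  unfold BUt
  have := BUphi_mono n hab
  have h : (0:ℝ) ≤ (1/2:ℝ)^n/4 := by positivity
  exact mul_le_mul_of_nonneg_left this h

lemma BUf_mono : Monotone BUf := by
  intro a b hab
  unfold BUf
  apply add_le_add
  · have : min a 1 ≤ min b 1 := min_le_min hab le_rfl
    linarith
  · exact Summable.tsum_le_tsum (fun n => BUt_mono n hab) (BUt_summable a) (BUt_summable b)

lemma BUf_cont : Continuous BUf := by
  unfold BUf
  apply Continuous.add
  · fun_prop
  · apply continuous_tsum (u := fun n => (1/2:ℝ)^n/4) _ BU_summable_bound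
      (fun n x => BUt_norm_le n x)
    intro n
    unfold BUt BUphi
    fun_prop

lemma BU_tsum_eval (m : ℕ) (x : ℝ) (h1 : ∀ k < m, (1:ℝ) ≤ 8^k * (x - 2^k))
    (h2 : x ≤ 2^m) : ∑' n, BUt n x = (1 - (1/2:ℝ)^m)/2 := by
  rw [tsum_eq_sum (s := Finset.range m) (by
    intro b hb
    rw [Finset.mem_range, not_lt] at hb
    have : x ≤ 2^b := le_trans h2 (by
      apply pow_le_pow_right₀ (by norm_num : (1:ℝ) ≤ 2) hb)
    rw [BUt, BUphi_eq_zero b x this, mul_zero])]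
  have : ∀ k ∈ Finset.range m, BUt k x = (1/2:ℝ)^k/4 := by
    intro k hk
    rw [Finset.mem_range] at hk
    rw [BUt, BUphi_eq_one k x (h1 k hk), mul_one]
  rw [Finset.sum_congr rfl this]
  have hg : ∑ k ∈ Finset.range m, ((1/2:ℝ))^k = ((1/2:ℝ)^m - 1)/((1/2) - 1) :=
    geom_sum_eq (by norm_num) m
  have : ∑ k ∈ Finset.range m, ((1/2:ℝ))^k/4 = (∑ k ∈ Finset.range m, ((1/2:ℝ))^k)/4 :=
    (Finset.sum_div _ _ _).symm
  rw [this, hg]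
  ring

lemma BU_ramp_done (k n : ℕ) (hkn : k < n) (x : ℝ) (hx : (2:ℝ)^n ≤ x) :
    (1:ℝ) ≤ 8^k * (x - 2^k) := by
  have h2 : (2:ℝ)^k * 2 ≤ 2^n := by
    calc (2:ℝ)^k * 2 = 2^(k+1) := by ring
    _ ≤ 2^n := pow_le_pow_right₀ (by norm_num) hkn
  have h16 : (1:ℝ) ≤ 8^k * 2^k := by
    rw [← mul_pow]
    exact one_le_pow₀ (by norm_num)
  have hsub : (2:ℝ)^k ≤ x - 2^k := by linarith
  calc (1:ℝ) ≤ 8^k * 2^k := h16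
    _ ≤ 8^k * (x - 2^k) := by
        apply mul_le_mul_of_nonneg_left hsub (by positivity)

lemma BUf_at_pow (n : ℕ) (_hn : 1 ≤ n) : BUf (2^n) = (1 - (1/2:ℝ)^n)/2 := by
  unfold BUf
  have h1 : (1:ℝ) ≤ 2^n := one_le_pow₀ (by norm_num)
  rw [min_eq_right h1, BU_tsum_eval n _ (fun k hk => BU_ramp_done k n hk _ le_rfl) le_rfl]
  ring

lemma BUf_at_pow' (n : ℕ) (hn : 1 ≤ n) :
    BUf (2^n + (1/2)^n) = (1 - (1/2:ℝ)^(n+1))/2 := by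
  unfold BUf
  have hp : (0:ℝ) < (1/2:ℝ)^n := by positivity
  have h1 : (1:ℝ) ≤ 2^n + (1/2)^n := by
    have : (1:ℝ) ≤ 2^n := one_le_pow₀ (by norm_num)
    linarith
  rw [min_eq_right h1]
  have heval : ∑' k, BUt k (2^n + (1/2)^n) = (1 - (1/2:ℝ)^(n+1))/2 := by
    apply BU_tsum_eval
    · intro k hk
      rcases Nat.lt_succ_iff_lt_or_eq.mp hk with h | h
      · exact BU_ramp_done k n h _ (by linarith)
      · subst h
        have : (8:ℝ)^k * ((2^k + (1/2)^k) - 2^k) = 4^k := by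
          rw [add_sub_cancel_left, ← mul_pow]; norm_num
        rw [this]
        exact one_le_pow₀ (by norm_num)
    · have hhalf : (1/2:ℝ)^n ≤ 2^n := by
        apply pow_le_pow_left₀ (by norm_num) (by norm_num)
      calc (2:ℝ)^n + (1/2)^n ≤ 2^n + 2^n := by linarith
        _ = 2^(n+1) := by ring
  rw [heval]; ring

lemma BUf_le_half (x : ℝ) : BUf x ≤ 1/2 := by
  unfold BUf
  have h1 : min x 1 - 1 ≤ 0 := by
    have := min_le_right x 1; linarith
  have h2 : ∑' n, BUt n x ≤ ∑' n : ℕ, (1/2:ℝ)^n/4 := by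
    apply Summable.tsum_le_tsum _ (BUt_summable x) BU_summable_bound
    intro n
    rw [BUt]
    calc (1/2:ℝ)^n/4 * BUphi n x ≤ (1/2:ℝ)^n/4 * 1 := by
          apply mul_le_mul_of_nonneg_left (BUphi_le_one n x) (by positivity)
      _ = (1/2:ℝ)^n/4 := mul_one _
  have h3 : ∑' n : ℕ, (1/2:ℝ)^n/4 = 1/2 := by
    rw [tsum_div_const, tsum_geometric_of_lt_one (by norm_num) (by norm_num)]
    norm_num
  rw [h3] at h2
  linarith

lemma BUf_zero : BUf 0 = -(1/2) := by
  unfold BUf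
  have h1 : min (0:ℝ) 1 = 0 := min_eq_left (by norm_num)
  have h2 : ∑' n, BUt n 0 = 0 := by
    have he : ∀ n : ℕ, BUt n 0 = 0 := by
      intro n
      rw [BUt, BUphi_eq_zero n 0 (by positivity), mul_zero]
    simp only [he, tsum_zero]
  rw [h1, h2]; ring

lemma BUf_one : BUf 1 = 0 := by
  unfold BUf
  have h1 : min (1:ℝ) 1 = 1 := min_self 1
  have h2 : ∑' n, BUt n 1 = 0 := by
    have he : ∀ n : ℕ, BUt n 1 = 0 := by
      intro n
      have : (1:ℝ) ≤ 2^n := one_le_pow₀ (by norm_num)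
      rw [BUt, BUphi_eq_zero n 1 this, mul_zero]
    simp only [he, tsum_zero]
  rw [h1, h2]; ring

lemma BUf_tendsto : Tendsto BUf atTop (nhds (1/2)) := by
  rw [Metric.tendsto_atTop]
  intro ε hε
  obtain ⟨m, hm⟩ := exists_pow_lt_of_lt_one hε (by norm_num : (1/2:ℝ) < 1)
  refine ⟨2^(m+1) + (1/2)^(m+1), fun x hx => ?_⟩
  have hfx : (1 - (1/2:ℝ)^(m+2))/2 ≤ BUf x := by
    rw [← BUf_at_pow' (m+1) (by omega)]
    exact BUf_mono hx
  have hub := BUf_le_half x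
  rw [Real.dist_eq, abs_sub_lt_iff]
  constructor
  · linarith
  · have : (1/2:ℝ)^(m+2) < ε := by
      calc (1/2:ℝ)^(m+2) ≤ (1/2)^m := by
            apply pow_le_pow_of_le_one (by norm_num) (by norm_num) (by omega)
        _ < ε := hm
    linarith

/-- rpow bound: (1+s)^γ ≤ 1 + 2γs for γs ≤ 1/2 -/
lemma BU_rpow_bound (s γ : ℝ) (hs : 0 < s) (hγ : 0 < γ) (h : γ * s ≤ 1/2) :
    (1 + s) ^ γ ≤ 1 + 2 * (γ * s) := by
  have h1 : (0:ℝ) < 1 + s := by linarith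
  rw [Real.rpow_def_of_pos h1]
  have hlog : Real.log (1 + s) ≤ s := by
    have := Real.log_le_sub_one_of_pos h1
    linarith
  have h2 : Real.exp (Real.log (1+s) * γ) ≤ Real.exp (s * γ) := by
    apply Real.exp_le_exp.mpr
    exact mul_le_mul_of_nonneg_right hlog hγ.le
  have h3 : Real.exp (s * γ) ≤ 1 + 2 * (γ * s) := by
    have hu : 0 < γ * s := by positivity
    have hinv : Real.exp (s * γ) * (1 - γ * s) ≤ 1 := by
      have := Real.add_one_le_exp (-(s*γ))
      have hpos := Real.exp_pos (s * γ)
      have hmul : Real.exp (s*γ) * Real.exp (-(s*γ)) = 1 := by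
        rw [← Real.exp_add]; simp
      nlinarith [Real.exp_pos (s*γ)]
    nlinarith
  linarith

end BUaux

/-- **Example (bounded utility with infinite asymptotic elasticity).**  There exists a
non-decreasing continuous function `f : [0,∞) → ℝ` with `f 0 = -1/2`, `f 1 = 0`, `f ≤ 1/2`,
`f(x) → 1/2` as `x → ∞`, whose generalized asymptotic elasticity at `+∞` is infinite
(for every `γ > 0` and `x̄ ≥ 0` there are `λ ≥ 1`, `x ≥ x̄` with `f(λx) > λ^γ f(x)`),
but which nevertheless satisfies the growth condition (GR) with `x̄ = 1` and `c = 1/2`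
for every exponent `γ̄ > 0`. -/
theorem exists_bounded_utility_with_infinite_elasticity :
    ∃ f : ℝ → ℝ,
      MonotoneOn f (Set.Ici 0) ∧ ContinuousOn f (Set.Ici 0) ∧
      f 0 = -(1/2) ∧ f 1 = 0 ∧ (∀ x : ℝ, 0 ≤ x → f x ≤ 1/2) ∧
      Tendsto f atTop (nhds (1/2)) ∧
      -- infinite generalized asymptotic elasticity:
      (∀ γ : ℝ, 0 < γ → ∀ xbar : ℝ, 0 ≤ xbar →
        ∃ lam : ℝ, 1 ≤ lam ∧ ∃ x : ℝ, xbar ≤ x ∧ lam ^ γ * f x < f (lam * x)) ∧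
      -- the growth condition (GR) with `x̄ = 1`, `c = 1/2`:
      (∀ γbar : ℝ, 0 < γbar → ∀ lam : ℝ, 1 ≤ lam → ∀ x : ℝ, 1 ≤ x →
        f (lam * x) ≤ lam ^ γbar * f x + lam ^ γbar * (1/2)) := by
  refine ⟨BUf, BUf_mono.monotoneOn _, BUf_cont.continuousOn, BUf_zero, BUf_one,
    fun x _ => BUf_le_half x, BUf_tendsto, ?_, ?_⟩
  · -- infinite elasticity
    intro γ hγ xbar hxbar
    obtain ⟨N, hN⟩ := exists_nat_gt (max xbar (4*γ))
    set n := N + 1 with hn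
    have hpow : (N:ℝ) + 1 ≤ 2 ^ n := by
      have h1 : N + 1 ≤ 2 ^ n := by
        have := Nat.lt_two_pow_self (n := N)
        calc N + 1 ≤ 2 ^ N := this
          _ ≤ 2 ^ n := Nat.pow_le_pow_right (by norm_num) (by omega)
      exact_mod_cast h1
    have hxb : xbar ≤ (2:ℝ)^n := by
      have := le_max_left xbar (4*γ)
      linarith
    have h4γ : 4 * γ ≤ (2:ℝ)^n := by
      have := le_max_right xbar (4*γ)
      linarith
    set a : ℝ := (1/2)^n with ha
    set s : ℝ := (1/4)^n with hs
    have hspos : 0 < s := by positivity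
    have hapos : 0 < a := by positivity
    have e1 : (2:ℝ)^n * s = a := by
      rw [hs, ha, ← mul_pow]; norm_num
    have e2 : a ≤ 1/2 := by
      rw [ha]
      calc (1/2:ℝ)^n ≤ (1/2)^1 :=
        pow_le_pow_of_le_one (by norm_num) (by norm_num) (by omega)
        _ = 1/2 := pow_one _
    have hγs : γ * s ≤ 1/2 := by nlinarith
    have hrpow : (1 + s) ^ γ ≤ 1 + 2 * (γ * s) := BU_rpow_bound s γ hspos hγ hγs
    have h2γs : 2 * (γ * s) ≤ a / 2 := by nlinarith
    refine ⟨1 + s, by linarith, (2:ℝ)^n, hxb, ?_⟩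
    have hfx : BUf ((2:ℝ)^n) = (1 - a)/2 := BUf_at_pow n (by omega)
    have hmul : (1 + s) * (2:ℝ)^n = 2^n + (1/2)^n := by
      have : s * (2:ℝ)^n = (1/2)^n := by rw [mul_comm]; exact e1
      linarith [this]
    have hflx : BUf ((1 + s) * (2:ℝ)^n) = (1 - a/2)/2 := by
      rw [hmul, BUf_at_pow' n (by omega)]
      have : (1/2:ℝ)^(n+1) = a/2 := by rw [ha, pow_succ]; ring
      rw [this]
    rw [hfx, hflx]
    have hfxnn : (0:ℝ) ≤ (1 - a)/2 := by linarith
    calc (1 + s) ^ γ * ((1 - a)/2) ≤ (1 + 2*(γ*s)) * ((1 - a)/2) :=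
          mul_le_mul_of_nonneg_right hrpow hfxnn
      _ ≤ (1 + a/2) * ((1 - a)/2) := by nlinarith
      _ < (1 - a/2)/2 := by nlinarith
  · -- growth condition
    intro γbar hγbar lam hlam x hx
    have h1 : (1:ℝ) ≤ lam ^ γbar := Real.one_le_rpow hlam hγbar.le
    have h2 : 0 ≤ BUf x := by
      rw [← BUf_one]; exact BUf_mono hx
    have h3 : BUf (lam * x) ≤ 1/2 := BUf_le_half _
    nlinarith
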